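/- Let n ≥ 1 and r ∈ (0,1). Then the operator A_r = (r I_n + M_n)(I_n + r M_n)^{−1} on ℂ^n with the Euclidean norm is a contraction in the strong sense that sup_{k≥0} ‖A_r^k‖ ≤ 1 (so P(A_r) ≤ 1), and its spectrum is σ(A_r) = {r}. -/

import Mathlib

/-- The `n×n` nilpotent Jordan matrix with `1` on the superdiagonal. -/
noncomputable def jordanNilpotent (n : ℕ) : Matrix (Fin n) (Fin n) ℂ :=
  Matrix.of fun i j => if (i : ℕ) + 1 = (j : ℕ) then 1 else 0

/-- `A_r = (r Iₙ + Mₙ)(Iₙ + r Mₙ)⁻¹`. -/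
noncomputable def ArMatrix (n : ℕ) (r : ℝ) : Matrix (Fin n) (Fin n) ℂ :=
  ((r : ℂ) • 1 + jordanNilpotent n) * (1 + (r : ℂ) • jordanNilpotent n)⁻¹

lemma jordanNilpotent_pow_apply (n k : ℕ) (i j : Fin n) :
    (jordanNilpotent n ^ k) i j = if (i : ℕ) + k = (j : ℕ) then 1 else 0 := by
  induction k generalizing j with
  | zero => simp [Matrix.one_apply, Fin.ext_iff]
  | succ k ih =>
    rw [pow_succ, Matrix.mul_apply]
    simp only [ih]
    simp only [jordanNilpotent, Matrix.of_apply, ite_mul, one_mul, zero_mul]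
    by_cases h : (i : ℕ) + k < n
    · rw [Finset.sum_eq_single (⟨(i : ℕ) + k, h⟩ : Fin n)]
      · simp [add_assoc]
      · intro b _ hb
        exact if_neg fun hc => hb (Fin.ext hc.symm)
      · intro hb; exact absurd (Finset.mem_univ _) hb
    · rw [if_neg (by omega)]
      apply Finset.sum_eq_zero
      intro b _
      exact if_neg (by omega)

lemma jordanNilpotent_nilpotent (n : ℕ) : IsNilpotent (jordanNilpotent n) := by
  refine ⟨n, ?_⟩
  ext i j
  rw [jordanNilpotent_pow_apply, if_neg (by omega)]
  rfl

open Matrix in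
lemma jordan_mulVec_apply (m : ℕ) (z : Fin (m + 1) → ℂ) (i : Fin (m + 1)) :
    (jordanNilpotent (m + 1) *ᵥ z) i =
      if h : (i : ℕ) + 1 < m + 1 then z ⟨(i : ℕ) + 1, h⟩ else 0 := by
  simp only [Matrix.mulVec, dotProduct, jordanNilpotent, Matrix.of_apply, ite_mul,
    one_mul, zero_mul]
  by_cases h : (i : ℕ) + 1 < m + 1
  · rw [dif_pos h, Finset.sum_eq_single (⟨(i : ℕ) + 1, h⟩ : Fin (m + 1))]
    · simp
    · intro b _ hb
      exact if_neg fun hc => hb (Fin.ext hc.symm)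
    · intro hb; exact absurd (Finset.mem_univ _) hb
  · rw [dif_neg h]
    apply Finset.sum_eq_zero
    intro b _
    exact if_neg (by omega)

open Matrix in
lemma jordan_mulVec_sum_sq_le (m : ℕ) (z : Fin (m + 1) → ℂ) :
    ∑ i, ‖(jordanNilpotent (m + 1) *ᵥ z) i‖ ^ 2 ≤ ∑ i, ‖z i‖ ^ 2 := by
  have h1 : ∀ i : Fin (m + 1),
      ‖(jordanNilpotent (m + 1) *ᵥ z) i‖ ^ 2 ≤ ‖z (i + 1)‖ ^ 2 := by
    intro i
    rw [jordan_mulVec_apply]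
    split
    · rename_i h
      have : (⟨(i : ℕ) + 1, h⟩ : Fin (m + 1)) = i + 1 := by
        apply Fin.ext
        simp [Fin.add_def, Nat.mod_eq_of_lt h]
      rw [this]
    · simpa using sq_nonneg ‖z (i + 1)‖
  calc ∑ i, ‖(jordanNilpotent (m + 1) *ᵥ z) i‖ ^ 2
      ≤ ∑ i, ‖z (i + 1)‖ ^ 2 := Finset.sum_le_sum fun i _ => h1 i
    _ = ∑ i, ‖z i‖ ^ 2 := Equiv.sum_comp (Equiv.addRight (1 : Fin (m + 1))) fun i => ‖z i‖ ^ 2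

open Matrix in
lemma jordan_clm_norm_le (m : ℕ) (y : EuclideanSpace ℂ (Fin (m + 1))) :
    ‖Matrix.toEuclideanCLM (𝕜 := ℂ) (jordanNilpotent (m + 1)) y‖ ≤ ‖y‖ := by
  rw [EuclideanSpace.norm_eq, EuclideanSpace.norm_eq]
  apply Real.sqrt_le_sqrt
  have h := Matrix.ofLp_toEuclideanCLM (𝕜 := ℂ) (jordanNilpotent (m + 1)) y
  calc ∑ i, ‖(Matrix.toEuclideanCLM (𝕜 := ℂ) (jordanNilpotent (m + 1)) y) i‖ ^ 2
      = ∑ i, ‖(jordanNilpotent (m + 1) *ᵥ (WithLp.equiv 2 _ y)) i‖ ^ 2 := by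
        refine Finset.sum_congr rfl fun i _ => ?_
        congr 1
    _ ≤ ∑ i, ‖(WithLp.equiv 2 _ y) i‖ ^ 2 := jordan_mulVec_sum_sq_le m _
    _ = ∑ i, ‖y i‖ ^ 2 := rfl

lemma contraction_step {E : Type*} [NormedAddCommGroup E] [InnerProductSpace ℂ E]
    {r : ℝ} (hr0 : 0 ≤ r) (hr1 : r ≤ 1) {y w : E} (hw : ‖w‖ ≤ ‖y‖) :
    ‖(r : ℂ) • y + w‖ ≤ ‖y + (r : ℂ) • w‖ := by
  have h1 := norm_add_sq (𝕜 := ℂ) ((r : ℂ) • y) w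
  have h2 := norm_add_sq (𝕜 := ℂ) y ((r : ℂ) • w)
  rw [inner_smul_left] at h1
  rw [inner_smul_right] at h2
  simp only [Complex.conj_ofReal, norm_smul, Complex.norm_real, Real.norm_eq_abs,
    abs_of_nonneg hr0] at h1 h2
  rw [show ∀ zz : ℂ, RCLike.re ((r : ℂ) * zz) = r * RCLike.re zz from fun zz => by
    simp [Complex.mul_re]] at h1 h2
  have h3 : ‖w‖ ^ 2 ≤ ‖y‖ ^ 2 := by nlinarith [norm_nonneg w]
  have h4 : (0 : ℝ) ≤ 1 - r ^ 2 := by nlinarith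
  have h5 : (1 - r ^ 2) * ‖w‖ ^ 2 ≤ (1 - r ^ 2) * ‖y‖ ^ 2 :=
    mul_le_mul_of_nonneg_left h3 h4
  have hsq : ‖(r : ℂ) • y + w‖ ^ 2 ≤ ‖y + (r : ℂ) • w‖ ^ 2 := by
    rw [h1, h2]; nlinarith [h5]
  nlinarith [norm_nonneg ((r : ℂ) • y + w), norm_nonneg (y + (r : ℂ) • w), hsq]

/-- For `r ∈ (0,1)`, the operator `A_r` on Euclidean `ℂⁿ` is a contraction:
`‖A_rᵏ‖ ≤ 1` for all `k ≥ 0` (so `P(A_r) ≤ 1`), and `σ(A_r) = {r}`. -/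
theorem Ar_power_bounded_and_spectrum
    (n : ℕ) (hn : 1 ≤ n) (r : ℝ) (hr : r ∈ Set.Ioo (0:ℝ) 1) :
    (∀ k : ℕ, ‖(Matrix.toEuclideanCLM (𝕜 := ℂ) (ArMatrix n r)) ^ k‖ ≤ 1) ∧
      spectrum ℂ (ArMatrix n r) = {(r : ℂ)} := by
  obtain ⟨hr0, hr1⟩ := hr
  obtain ⟨m, rfl⟩ : ∃ m, n = m + 1 := ⟨n - 1, by omega⟩
  set M := jordanNilpotent (m + 1) with hMdef
  have hMnil : IsNilpotent M := jordanNilpotent_nilpotent (m + 1)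
  have hU : IsUnit (1 + (r : ℂ) • M) := (hMnil.smul ((r : ℂ))).isUnit_one_add
  have hcommM : Commute M ((1 : Matrix _ _ ℂ) + (r : ℂ) • M) :=
    (Commute.one_right M).add_right ((Commute.refl M).smul_right _)
  obtain ⟨u, hu⟩ := hU
  set V : Matrix (Fin (m + 1)) (Fin (m + 1)) ℂ := ↑u⁻¹ with hVdef
  have hinv : (1 + (r : ℂ) • M)⁻¹ = V := by
    rw [hVdef, Matrix.coe_units_inv, hu]
  have hcomm : Commute M V := Commute.units_inv_right (by rw [hu]; exact hcommM)
  have hmulinv : ((1 : Matrix _ _ ℂ) + (r : ℂ) • M) * V = 1 := by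
    rw [← hu, hVdef]; exact u.mul_inv
  have hA : ArMatrix (m + 1) r = ((r : ℂ) • 1 + M) * V := by
    rw [ArMatrix, hinv]
  have key : ArMatrix (m + 1) r - (r : ℂ) • 1 = ((1 - (r : ℂ) ^ 2) • M) * V := by
    rw [hA]
    calc ((r : ℂ) • 1 + M) * V - (r : ℂ) • 1
        = ((r : ℂ) • 1 + M) * V - ((r : ℂ) • (1 + (r : ℂ) • M)) * V := by
          rw [smul_mul_assoc, hmulinv]
      _ = (((r : ℂ) • 1 + M) - (r : ℂ) • (1 + (r : ℂ) • M)) * V := by rw [sub_mul]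
      _ = ((1 - (r : ℂ) ^ 2) • M) * V := by congr 1; module
  have hNnil : IsNilpotent (ArMatrix (m + 1) r - (r : ℂ) • 1) := by
    rw [key]
    exact Commute.isNilpotent_mul_right (hcomm.smul_left _) (hMnil.smul _)
  constructor
  · -- norm bound
    have hT1 : ‖Matrix.toEuclideanCLM (𝕜 := ℂ) (ArMatrix (m + 1) r)‖ ≤ 1 := by
      refine ContinuousLinearMap.opNorm_le_bound _ zero_le_one fun x => ?_
      rw [one_mul]
      set y := Matrix.toEuclideanCLM (𝕜 := ℂ) V x with hy
      set w := Matrix.toEuclideanCLM (𝕜 := ℂ) M y with hw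
      have hxy : x = y + (r : ℂ) • w := by
        have h0 : Matrix.toEuclideanCLM (𝕜 := ℂ)
            (((1 : Matrix _ _ ℂ) + (r : ℂ) • M) * V) x = x := by
          rw [hmulinv, map_one, ContinuousLinearMap.one_apply]
        rw [← h0, map_mul, ContinuousLinearMap.mul_apply, map_add, map_one, map_smul,
          ContinuousLinearMap.add_apply, ContinuousLinearMap.one_apply,
          ContinuousLinearMap.smul_apply]
      have hTx : Matrix.toEuclideanCLM (𝕜 := ℂ) (ArMatrix (m + 1) r) x = (r : ℂ) • y + w := by
        rw [hA, map_mul, ContinuousLinearMap.mul_apply, map_add, map_smul, map_one,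
          ContinuousLinearMap.add_apply, ContinuousLinearMap.smul_apply,
          ContinuousLinearMap.one_apply]
      rw [hTx]
      conv_rhs => rw [hxy]
      exact contraction_step hr0.le hr1.le (jordan_clm_norm_le m y)
    intro k
    cases k with
    | zero =>
      rw [pow_zero]
      simpa [ContinuousLinearMap.one_def] using
        (ContinuousLinearMap.norm_id_le : ‖(ContinuousLinearMap.id ℂ (EuclideanSpace ℂ (Fin (m + 1))))‖ ≤ 1)
    | succ k =>
      exact le_trans (norm_pow_le' _ (Nat.succ_pos k))
        (pow_le_one₀ (norm_nonneg _) hT1)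
  · -- spectrum
    have hAr : ArMatrix (m + 1) r =
        algebraMap ℂ _ (r : ℂ) + (ArMatrix (m + 1) r - (r : ℂ) • 1) := by
      rw [Algebra.algebraMap_eq_smul_one]
      abel
    have hσN : spectrum ℂ (ArMatrix (m + 1) r - (r : ℂ) • 1) = {0} := by
      ext z
      simp only [spectrum.mem_iff, Set.mem_singleton_iff]
      constructor
      · intro h
        by_contra hz
        apply h
        have hu' : IsUnit (algebraMap ℂ (Matrix (Fin (m + 1)) (Fin (m + 1)) ℂ) z) :=
          (isUnit_iff_ne_zero.mpr hz).map (algebraMap ℂ _)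
        have h2 := hNnil.neg.isUnit_add_left_of_commute hu'
          ((Algebra.commutes z (-(ArMatrix (m + 1) r - (r : ℂ) • 1))).symm)
        rwa [← sub_eq_add_neg] at h2
      · rintro rfl
        simp only [map_zero, zero_sub]
        rw [IsUnit.neg_iff]
        exact hNnil.not_isUnit
    rw [hAr, ← spectrum.singleton_add_eq, hσN, Set.singleton_add_singleton, add_zero]
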